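/- arXiv:1907.04242 — 2 statements merged into one kernel-verified Lean document; each statement's English description precedes it below -/
import Mathlib

section
/- For three binary random variables, the maximum value I3(X1;X2;X3) = 1 bit is attained if and only if each Xi is unbiased (H(Xi)=1) and each variable is a deterministic function of each other, i.e. X1 = X2 or X1 = 1 - X2, and X1 = X3 or X1 = 1 - X3 almost surely; equivalently, the joint law is one of the four laws p000=p111=1/2, p001=p110=1/2, p010=p101=1/2, or p011=p100=1/2. -/
open Finset

noncomputable def negMulLog2 (x : ℝ) : ℝ := -(x * Real.logb 2 x)

noncomputable def prob {Ω α : Type*} [Fintype Ω] [DecidableEq α]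
    (p : Ω → ℝ) (X : Ω → α) (x : α) : ℝ :=
  ∑ ω : Ω, if X ω = x then p ω else 0

noncomputable def ent {Ω α : Type*} [Fintype Ω] [Fintype α] [DecidableEq α]
    (p : Ω → ℝ) (X : Ω → α) : ℝ :=
  ∑ x : α, negMulLog2 (prob p X x)

noncomputable def condp {Ω γ : Type*} [Fintype Ω] [DecidableEq γ]
    (p : Ω → ℝ) (Z : Ω → γ) (z : γ) : Ω → ℝ :=
  fun ω => if Z ω = z then p ω / prob p Z z else 0

noncomputable def I2 {Ω α β : Type*} [Fintype Ω] [Fintype α] [DecidableEq α]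
    [Fintype β] [DecidableEq β]
    (p : Ω → ℝ) (X : Ω → α) (Y : Ω → β) : ℝ :=
  ent p X + ent p Y - ent p (fun ω => (X ω, Y ω))

noncomputable def condI2 {Ω α β γ : Type*} [Fintype Ω] [Fintype α] [DecidableEq α]
    [Fintype β] [DecidableEq β] [Fintype γ] [DecidableEq γ]
    (p : Ω → ℝ) (X : Ω → α) (Y : Ω → β) (Z : Ω → γ) : ℝ :=
  ∑ z : γ, prob p Z z * I2 (condp p Z z) X Y

noncomputable def I3 {Ω α β γ : Type*} [Fintype Ω] [Fintype α] [DecidableEq α]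
    [Fintype β] [DecidableEq β] [Fintype γ] [DecidableEq γ]
    (p : Ω → ℝ) (X : Ω → α) (Y : Ω → β) (Z : Ω → γ) : ℝ :=
  ent p X + ent p Y + ent p Z
    - ent p (fun ω => (X ω, Y ω)) - ent p (fun ω => (X ω, Z ω))
    - ent p (fun ω => (Y ω, Z ω))
    + ent p (fun ω => (X ω, Y ω, Z ω))

/-! ### Auxiliary lemmas -/

lemma n2_zero : negMulLog2 0 = 0 := by simp [negMulLog2]

lemma n2_half : negMulLog2 (1/2) = 1/2 := by
  have : Real.logb 2 (1/2) = -1 := by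
    rw [one_div, Real.logb_inv, Real.logb_self_eq_one] <;> norm_num
  simp [negMulLog2, this]

lemma key (x R C s : ℝ) (hx : 0 ≤ x) (hR : x ≤ R) (hC : x ≤ C) (hs : 0 < s) :
    x - R*C/s ≤ x*Real.log x + x*Real.log s - x*Real.log R - x*Real.log C := by
  rcases eq_or_lt_of_le hx with h|h
  · rw [← h]
    have hR' : 0 ≤ R := le_trans hx hR
    have hC' : 0 ≤ C := le_trans hx hC
    have : 0 ≤ R*C/s := by positivity
    simp; linarith
  · have hRp : 0 < R := lt_of_lt_of_le h hR
    have hCp : 0 < C := lt_of_lt_of_le h hC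
    have h1 : Real.log (R*C/(x*s)) ≤ R*C/(x*s) - 1 :=
      Real.log_le_sub_one_of_pos (by positivity)
    have h2 : Real.log (R*C/(x*s)) = Real.log R + Real.log C - Real.log x - Real.log s := by
      rw [Real.log_div (by positivity) (by positivity), Real.log_mul (by positivity) (by positivity),
        Real.log_mul (by positivity) (by positivity)]
      ring
    rw [h2] at h1
    have h3 := mul_le_mul_of_nonneg_left h1 hx
    have h4 : x * (R*C/(x*s)) = R*C/s := by field_simp
    nlinarith [h3, h4]

lemma n2_log (x : ℝ) : Real.log 2 * negMulLog2 x = -(x * Real.log x) := by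
  unfold negMulLog2 Real.logb
  have : Real.log 2 ≠ 0 := ne_of_gt (Real.log_pos one_lt_two)
  field_simp

lemma mutual2 (r00 r01 r10 r11 : ℝ) (h00 : 0 ≤ r00) (h01 : 0 ≤ r01) (h10 : 0 ≤ r10) (h11 : 0 ≤ r11) :
    negMulLog2 (r00+r01+r10+r11) + (negMulLog2 r00 + negMulLog2 r01 + negMulLog2 r10 + negMulLog2 r11)
      ≤ (negMulLog2 (r00+r01) + negMulLog2 (r10+r11)) + (negMulLog2 (r00+r10) + negMulLog2 (r01+r11)) := by
  have l2 : (0:ℝ) < Real.log 2 := Real.log_pos one_lt_two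
  rcases eq_or_lt_of_le (show (0:ℝ) ≤ r00+r01+r10+r11 by positivity) with hs|hs
  · have e00 : r00 = 0 := by linarith
    have e01 : r01 = 0 := by linarith
    have e10 : r10 = 0 := by linarith
    have e11 : r11 = 0 := by linarith
    simp [e00, e01, e10, e11, n2_zero]
  · set s := r00+r01+r10+r11 with hsdef
    rw [← mul_le_mul_iff_right₀ l2]
    have k00 := key r00 (r00+r01) (r00+r10) s h00 (by linarith) (by linarith) hs
    have k01 := key r01 (r00+r01) (r01+r11) s h01 (by linarith) (by linarith) hs
    have k10 := key r10 (r10+r11) (r00+r10) s h10 (by linarith) (by linarith) hs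
    have k11 := key r11 (r10+r11) (r01+r11) s h11 (by linarith) (by linarith) hs
    have hid : (r00+r01)*(r00+r10)/s + (r00+r01)*(r01+r11)/s + (r10+r11)*(r00+r10)/s + (r10+r11)*(r01+r11)/s = s := by
      field_simp
      ring
    have n1 := n2_log (r00+r01+r10+r11)
    have n2 := n2_log r00; have n3 := n2_log r01; have n4 := n2_log r10; have n5 := n2_log r11
    have n6 := n2_log (r00+r01); have n7 := n2_log (r10+r11)
    have n8 := n2_log (r00+r10); have n9 := n2_log (r01+r11)
    simp only [mul_add, n1, n2, n3, n4, n5, n6, n7, n8, n9]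
    rw [hsdef] at k00 k01 k10 k11 hid
    linarith [k00, k01, k10, k11, hid]

lemma n2_add_le (x y : ℝ) (hx : 0 ≤ x) (hy : 0 ≤ y) :
    negMulLog2 (x+y) ≤ negMulLog2 x + negMulLog2 y := by
  unfold negMulLog2
  have h1 : x * Real.logb 2 x ≤ x * Real.logb 2 (x+y) := by
    rcases eq_or_lt_of_le hx with h|h
    · rw [← h]; simp
    · exact mul_le_mul_of_nonneg_left (Real.logb_le_logb_of_le one_lt_two h (by linarith)) hx
  have h2 : y * Real.logb 2 y ≤ y * Real.logb 2 (x+y) := by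
    rcases eq_or_lt_of_le hy with h|h
    · rw [← h]; simp
    · exact mul_le_mul_of_nonneg_left (Real.logb_le_logb_of_le one_lt_two h (by linarith)) hy
  nlinarith [h1, h2]

lemma n2_add_lt (x y : ℝ) (hx : 0 < x) (hy : 0 < y) :
    negMulLog2 (x+y) < negMulLog2 x + negMulLog2 y := by
  unfold negMulLog2
  have h1 : x * Real.logb 2 x < x * Real.logb 2 (x+y) :=
    mul_lt_mul_of_pos_left (Real.logb_lt_logb one_lt_two hx (by linarith)) hx
  have h2 : y * Real.logb 2 y < y * Real.logb 2 (x+y) :=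
    mul_lt_mul_of_pos_left (Real.logb_lt_logb one_lt_two hy (by linarith)) hy
  nlinarith [h1, h2]

lemma n2_quad1 (a b c d : ℝ) (ha : 0 ≤ a) (hb : 0 ≤ b) (hc : 0 ≤ c) (hd : 0 ≤ d) :
    negMulLog2 (a+b+c+d) ≤ negMulLog2 (a+b) + negMulLog2 (c+d) := by
  rw [show a+b+c+d = (a+b)+(c+d) by ring]
  exact n2_add_le _ _ (by linarith) (by linarith)

lemma n2_quad1_eq (a b c d : ℝ) (ha : 0 ≤ a) (hb : 0 ≤ b) (hc : 0 ≤ c) (hd : 0 ≤ d)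
    (h : negMulLog2 (a+b+c+d) = negMulLog2 (a+b) + negMulLog2 (c+d)) :
    a+b = 0 ∨ c+d = 0 := by
  by_contra hcon
  push_neg at hcon
  have h1 : 0 < a+b := lt_of_le_of_ne (by linarith) (Ne.symm hcon.1)
  have h2 : 0 < c+d := lt_of_le_of_ne (by linarith) (Ne.symm hcon.2)
  have := n2_add_lt (a+b) (c+d) h1 h2
  rw [show (a+b)+(c+d) = a+b+c+d by ring] at this
  linarith

lemma n2_quad2 (a b c d : ℝ) (ha : 0 ≤ a) (hb : 0 ≤ b) (hc : 0 ≤ c) (hd : 0 ≤ d) :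
    negMulLog2 (a+b+c+d) ≤ negMulLog2 (a+c) + negMulLog2 (b+d) := by
  rw [show a+b+c+d = (a+c)+(b+d) by ring]
  exact n2_add_le _ _ (by linarith) (by linarith)

lemma n2_quad2_eq (a b c d : ℝ) (ha : 0 ≤ a) (hb : 0 ≤ b) (hc : 0 ≤ c) (hd : 0 ≤ d)
    (h : negMulLog2 (a+b+c+d) = negMulLog2 (a+c) + negMulLog2 (b+d)) :
    a+c = 0 ∨ b+d = 0 := by
  by_contra hcon
  push_neg at hcon
  have h1 : 0 < a+c := lt_of_le_of_ne (by linarith) (Ne.symm hcon.1)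
  have h2 : 0 < b+d := lt_of_le_of_ne (by linarith) (Ne.symm hcon.2)
  have := n2_add_lt (a+c) (b+d) h1 h2
  rw [show (a+c)+(b+d) = a+b+c+d by ring] at this
  linarith

lemma keyB (t : ℝ) (ht : 0 ≤ t) :
    Real.log 2 * negMulLog2 t ≤ 1/2 - t + t * Real.log 2 ∧
    (t ≠ 1/2 → Real.log 2 * negMulLog2 t < 1/2 - t + t * Real.log 2) := by
  have l2 : (0:ℝ) < Real.log 2 := Real.log_pos one_lt_two
  have hlb : Real.log 2 * negMulLog2 t = -(t * Real.log t) := by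
    unfold negMulLog2 Real.logb; field_simp
  rcases eq_or_lt_of_le ht with h|h
  · rw [← h]
    constructor
    · simp [n2_zero]
    · intro _; simp [n2_zero]
  · have hpos : 0 < 1/(2*t) := by positivity
    have hlog : Real.log (1/(2*t)) = -(Real.log 2 + Real.log t) := by
      rw [one_div, Real.log_inv, Real.log_mul (by norm_num) (ne_of_gt h)]
    constructor
    · have := Real.log_le_sub_one_of_pos hpos
      rw [hlog] at this
      have h3 := mul_le_mul_of_nonneg_left this (le_of_lt h)
      have h4 : t * (1/(2*t)) = 1/2 := by field_simp
      rw [hlb]; nlinarith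
    · intro hne
      have := Real.log_lt_sub_one_of_pos hpos (by
        intro hc
        apply hne
        field_simp at hc
        linarith)
      rw [hlog] at this
      have h3 := mul_lt_mul_of_pos_left this h
      have h4 : t * (1/(2*t)) = 1/2 := by field_simp
      rw [hlb]; nlinarith

lemma binEnt_le (a b : ℝ) (ha : 0 ≤ a) (hb : 0 ≤ b) (hab : a + b = 1) :
    negMulLog2 a + negMulLog2 b ≤ 1 := by
  have l2 : (0:ℝ) < Real.log 2 := Real.log_pos one_lt_two
  have k1 := (keyB a ha).1
  have k2 := (keyB b hb).1
  nlinarith [k1, k2]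

lemma binEnt_eq (a b : ℝ) (ha : 0 ≤ a) (hb : 0 ≤ b) (hab : a + b = 1)
    (h : negMulLog2 a + negMulLog2 b = 1) : a = 1/2 := by
  have l2 : (0:ℝ) < Real.log 2 := Real.log_pos one_lt_two
  by_contra hne
  have k1 := (keyB a ha).2 hne
  have k2 := (keyB b hb).1
  nlinarith [k1, k2]

set_option maxHeartbeats 2000000 in
lemma main_forward (x0 x1 x2 x3 x4 x5 x6 x7 : ℝ)
    (h0 : 0 ≤ x0) (h1 : 0 ≤ x1) (h2 : 0 ≤ x2) (h3 : 0 ≤ x3)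
    (h4 : 0 ≤ x4) (h5 : 0 ≤ x5) (h6 : 0 ≤ x6) (h7 : 0 ≤ x7)
    (hsum : x0+x1+x2+x3+x4+x5+x6+x7 = 1)
    (hI3 : (negMulLog2 (x0+x1+x2+x3) + negMulLog2 (x4+x5+x6+x7))
      + (negMulLog2 (x0+x1+x4+x5) + negMulLog2 (x2+x3+x6+x7))
      + (negMulLog2 (x0+x2+x4+x6) + negMulLog2 (x1+x3+x5+x7))
      - (negMulLog2 (x0+x1) + negMulLog2 (x2+x3) + negMulLog2 (x4+x5) + negMulLog2 (x6+x7))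
      - (negMulLog2 (x0+x2) + negMulLog2 (x1+x3) + negMulLog2 (x4+x6) + negMulLog2 (x5+x7))
      - (negMulLog2 (x0+x4) + negMulLog2 (x1+x5) + negMulLog2 (x2+x6) + negMulLog2 (x3+x7))
      + (negMulLog2 x0 + negMulLog2 x1 + negMulLog2 x2 + negMulLog2 x3
         + negMulLog2 x4 + negMulLog2 x5 + negMulLog2 x6 + negMulLog2 x7) = 1) :
    (x0 = 1/2 ∧ x7 = 1/2 ∧ x1 = 0 ∧ x2 = 0 ∧ x3 = 0 ∧ x4 = 0 ∧ x5 = 0 ∧ x6 = 0) ∨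
    (x1 = 1/2 ∧ x6 = 1/2 ∧ x0 = 0 ∧ x2 = 0 ∧ x3 = 0 ∧ x4 = 0 ∧ x5 = 0 ∧ x7 = 0) ∨
    (x2 = 1/2 ∧ x5 = 1/2 ∧ x0 = 0 ∧ x1 = 0 ∧ x3 = 0 ∧ x4 = 0 ∧ x6 = 0 ∧ x7 = 0) ∨
    (x3 = 1/2 ∧ x4 = 1/2 ∧ x0 = 0 ∧ x1 = 0 ∧ x2 = 0 ∧ x5 = 0 ∧ x6 = 0 ∧ x7 = 0) := by
  have ssa1a := mutual2 x0 x2 x4 x6 h0 h2 h4 h6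
  have ssa1b := mutual2 x1 x3 x5 x7 h1 h3 h5 h7
  have ssa2a := mutual2 x0 x1 x4 x5 h0 h1 h4 h5
  have ssa2b := mutual2 x2 x3 x6 x7 h2 h3 h6 h7
  have m12a := n2_quad1 x0 x1 x2 x3 h0 h1 h2 h3
  have m12b := n2_quad1 x4 x5 x6 x7 h4 h5 h6 h7
  have m21a := n2_quad1 x0 x1 x4 x5 h0 h1 h4 h5
  have m21b := n2_quad1 x2 x3 x6 x7 h2 h3 h6 h7
  have m13a := n2_quad2 x0 x1 x2 x3 h0 h1 h2 h3
  have m13b := n2_quad2 x4 x5 x6 x7 h4 h5 h6 h7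
  have b1 := binEnt_le (x0+x1+x2+x3) (x4+x5+x6+x7) (by linarith) (by linarith) (by linarith)
  have b2 := binEnt_le (x0+x1+x4+x5) (x2+x3+x6+x7) (by linarith) (by linarith) (by linarith)
  have b3 := binEnt_le (x0+x2+x4+x6) (x1+x3+x5+x7) (by linarith) (by linarith) (by linarith)
  have hH1 : negMulLog2 (x0+x1+x2+x3) + negMulLog2 (x4+x5+x6+x7) = 1 :=
    le_antisymm b1 (by linarith [hI3, ssa1a, ssa1b, m21a, m21b])
  have hH2 : negMulLog2 (x0+x1+x4+x5) + negMulLog2 (x2+x3+x6+x7) = 1 :=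
    le_antisymm b2 (by linarith [hI3, ssa1a, ssa1b, m12a, m12b])
  have hH3 : negMulLog2 (x0+x2+x4+x6) + negMulLog2 (x1+x3+x5+x7) = 1 :=
    le_antisymm b3 (by linarith [hI3, ssa2a, ssa2b, m13a, m13b])
  have hP1 := binEnt_eq _ _ (by linarith : (0:ℝ) ≤ x0+x1+x2+x3) (by linarith) (by linarith) hH1
  have hP2 := binEnt_eq _ _ (by linarith : (0:ℝ) ≤ x0+x1+x4+x5) (by linarith) (by linarith) hH2
  have hP3 := binEnt_eq _ _ (by linarith : (0:ℝ) ≤ x0+x2+x4+x6) (by linarith) (by linarith) hH3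
  have hH12 : negMulLog2 (x0+x1) + negMulLog2 (x2+x3) + negMulLog2 (x4+x5) + negMulLog2 (x6+x7) = 1 :=
    le_antisymm (by linarith [hI3, ssa1a, ssa1b, hH1, hH2]) (by linarith [m12a, m12b, hH1])
  have e12a : negMulLog2 (x0+x1+x2+x3) = negMulLog2 (x0+x1) + negMulLog2 (x2+x3) :=
    le_antisymm m12a (by linarith [m12b, hH12, hH1])
  have e12b : negMulLog2 (x4+x5+x6+x7) = negMulLog2 (x4+x5) + negMulLog2 (x6+x7) :=
    le_antisymm m12b (by linarith [m12a, hH12, hH1])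
  have hH13 : negMulLog2 (x0+x2) + negMulLog2 (x1+x3) + negMulLog2 (x4+x6) + negMulLog2 (x5+x7) = 1 :=
    le_antisymm (by linarith [hI3, ssa2a, ssa2b, hH1, hH3]) (by linarith [m13a, m13b, hH1])
  have e13a : negMulLog2 (x0+x1+x2+x3) = negMulLog2 (x0+x2) + negMulLog2 (x1+x3) :=
    le_antisymm m13a (by linarith [m13b, hH13, hH1])
  have e13b : negMulLog2 (x4+x5+x6+x7) = negMulLog2 (x4+x6) + negMulLog2 (x5+x7) :=
    le_antisymm m13b (by linarith [m13a, hH13, hH1])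
  have d12a := n2_quad1_eq x0 x1 x2 x3 h0 h1 h2 h3 e12a
  have d12b := n2_quad1_eq x4 x5 x6 x7 h4 h5 h6 h7 e12b
  have d13a := n2_quad2_eq x0 x1 x2 x3 h0 h1 h2 h3 e13a
  have d13b := n2_quad2_eq x4 x5 x6 x7 h4 h5 h6 h7 e13b
  clear hI3 ssa1a ssa1b ssa2a ssa2b m12a m12b m21a m21b m13a m13b b1 b2 b3 hH1 hH2 hH3 hH12 hH13 e12a e12b e13a e13b
  rcases d12a with g1|g1 <;> rcases d12b with g2|g2 <;> rcases d13a with g3|g3 <;> rcases d13b with g4|g4 <;>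
    first
      | (left; refine ⟨by linarith, by linarith, by linarith, by linarith, by linarith, by linarith, by linarith, by linarith⟩)
      | (right; left; refine ⟨by linarith, by linarith, by linarith, by linarith, by linarith, by linarith, by linarith, by linarith⟩)
      | (right; right; left; refine ⟨by linarith, by linarith, by linarith, by linarith, by linarith, by linarith, by linarith, by linarith⟩)
      | (right; right; right; refine ⟨by linarith, by linarith, by linarith, by linarith, by linarith, by linarith, by linarith, by linarith⟩)

lemma ent1_expand (p : Fin 2 × Fin 2 × Fin 2 → ℝ) :
    ent p (fun ω => ω.1) = negMulLog2 (p (0,0,0) + p (0,0,1) + p (0,1,0) + p (0,1,1))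
      + negMulLog2 (p (1,0,0) + p (1,0,1) + p (1,1,0) + p (1,1,1)) := by
  simp [ent, prob, Fintype.sum_prod_type, Fin.sum_univ_two]; ring_nf

lemma ent2_expand (p : Fin 2 × Fin 2 × Fin 2 → ℝ) :
    ent p (fun ω => ω.2.1) = negMulLog2 (p (0,0,0) + p (0,0,1) + p (1,0,0) + p (1,0,1))
      + negMulLog2 (p (0,1,0) + p (0,1,1) + p (1,1,0) + p (1,1,1)) := by
  simp [ent, prob, Fintype.sum_prod_type, Fin.sum_univ_two]; ring_nf

lemma ent3_expand (p : Fin 2 × Fin 2 × Fin 2 → ℝ) :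
    ent p (fun ω => ω.2.2) = negMulLog2 (p (0,0,0) + p (0,1,0) + p (1,0,0) + p (1,1,0))
      + negMulLog2 (p (0,0,1) + p (0,1,1) + p (1,0,1) + p (1,1,1)) := by
  simp [ent, prob, Fintype.sum_prod_type, Fin.sum_univ_two]; ring_nf

lemma ent12_expand (p : Fin 2 × Fin 2 × Fin 2 → ℝ) :
    ent p (fun ω => (ω.1, ω.2.1)) = negMulLog2 (p (0,0,0) + p (0,0,1)) + negMulLog2 (p (0,1,0) + p (0,1,1))
      + negMulLog2 (p (1,0,0) + p (1,0,1)) + negMulLog2 (p (1,1,0) + p (1,1,1)) := by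
  simp [ent, prob, Fintype.sum_prod_type, Fin.sum_univ_two, Prod.ext_iff]; ring_nf

lemma ent13_expand (p : Fin 2 × Fin 2 × Fin 2 → ℝ) :
    ent p (fun ω => (ω.1, ω.2.2)) = negMulLog2 (p (0,0,0) + p (0,1,0)) + negMulLog2 (p (0,0,1) + p (0,1,1))
      + negMulLog2 (p (1,0,0) + p (1,1,0)) + negMulLog2 (p (1,0,1) + p (1,1,1)) := by
  simp [ent, prob, Fintype.sum_prod_type, Fin.sum_univ_two, Prod.ext_iff]; ring_nf

lemma ent23_expand (p : Fin 2 × Fin 2 × Fin 2 → ℝ) :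
    ent p (fun ω => (ω.2.1, ω.2.2)) = negMulLog2 (p (0,0,0) + p (1,0,0)) + negMulLog2 (p (0,0,1) + p (1,0,1))
      + negMulLog2 (p (0,1,0) + p (1,1,0)) + negMulLog2 (p (0,1,1) + p (1,1,1)) := by
  simp [ent, prob, Fintype.sum_prod_type, Fin.sum_univ_two, Prod.ext_iff]; ring_nf

lemma ent123_expand (p : Fin 2 × Fin 2 × Fin 2 → ℝ) :
    ent p (fun ω => (ω.1, ω.2.1, ω.2.2)) = negMulLog2 (p (0,0,0)) + negMulLog2 (p (0,0,1))
      + negMulLog2 (p (0,1,0)) + negMulLog2 (p (0,1,1)) + negMulLog2 (p (1,0,0))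
      + negMulLog2 (p (1,0,1)) + negMulLog2 (p (1,1,0)) + negMulLog2 (p (1,1,1)) := by
  simp [ent, prob, Fintype.sum_prod_type, Fin.sum_univ_two, Prod.ext_iff]; ring_nf

lemma sum_expand (p : Fin 2 × Fin 2 × Fin 2 → ℝ) :
    ∑ ω, p ω = p (0,0,0) + p (0,0,1) + p (0,1,0) + p (0,1,1)
      + p (1,0,0) + p (1,0,1) + p (1,1,0) + p (1,1,1) := by
  simp [Fintype.sum_prod_type, Fin.sum_univ_two]; ring_nf

set_option maxHeartbeats 2000000 in
theorem stmt7 (p : Fin 2 × Fin 2 × Fin 2 → ℝ)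
    (hp : ∀ ω, 0 ≤ p ω) (hs : ∑ ω, p ω = 1) :
    I3 p (fun ω => ω.1) (fun ω => ω.2.1) (fun ω => ω.2.2) = 1 ↔
      (p = fun ω => if ω = (0, 0, 0) ∨ ω = (1, 1, 1) then (1 / 2 : ℝ) else 0) ∨
      (p = fun ω => if ω = (0, 0, 1) ∨ ω = (1, 1, 0) then (1 / 2 : ℝ) else 0) ∨
      (p = fun ω => if ω = (0, 1, 0) ∨ ω = (1, 0, 1) then (1 / 2 : ℝ) else 0) ∨
      (p = fun ω => if ω = (0, 1, 1) ∨ ω = (1, 0, 0) then (1 / 2 : ℝ) else 0) := by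
  rw [sum_expand] at hs
  constructor
  · intro h
    simp only [I3] at h
    rw [ent1_expand, ent2_expand, ent3_expand, ent12_expand, ent13_expand, ent23_expand,
      ent123_expand] at h
    have key := main_forward (p (0,0,0)) (p (0,0,1)) (p (0,1,0)) (p (0,1,1))
      (p (1,0,0)) (p (1,0,1)) (p (1,1,0)) (p (1,1,1))
      (hp _) (hp _) (hp _) (hp _) (hp _) (hp _) (hp _) (hp _) (by linarith) (by linarith)
    rcases key with ⟨k1,k2,k3,k4,k5,k6,k7,k8⟩|⟨k1,k2,k3,k4,k5,k6,k7,k8⟩|⟨k1,k2,k3,k4,k5,k6,k7,k8⟩|⟨k1,k2,k3,k4,k5,k6,k7,k8⟩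
    · left
      funext ω
      obtain ⟨a,b,c⟩ := ω
      fin_cases a <;> fin_cases b <;> fin_cases c <;> norm_num [Prod.ext_iff, -Prod.mk_zero_zero, -Prod.mk_one_one] <;> linarith
    · right; left
      funext ω
      obtain ⟨a,b,c⟩ := ω
      fin_cases a <;> fin_cases b <;> fin_cases c <;> norm_num [Prod.ext_iff, -Prod.mk_zero_zero, -Prod.mk_one_one] <;> linarith
    · right; right; left
      funext ω
      obtain ⟨a,b,c⟩ := ω
      fin_cases a <;> fin_cases b <;> fin_cases c <;> norm_num [Prod.ext_iff, -Prod.mk_zero_zero, -Prod.mk_one_one] <;> linarith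
    · right; right; right
      funext ω
      obtain ⟨a,b,c⟩ := ω
      fin_cases a <;> fin_cases b <;> fin_cases c <;> norm_num [Prod.ext_iff, -Prod.mk_zero_zero, -Prod.mk_one_one] <;> linarith
  · intro h
    rcases h with h|h|h|h <;> subst h <;>
      (simp only [I3]
       rw [ent1_expand, ent2_expand, ent3_expand, ent12_expand, ent13_expand, ent23_expand,
        ent123_expand]
       norm_num [Prod.ext_iff, n2_zero, n2_half])
end

section
/- Let Δ be the simplex of probability laws on a finite set of cardinality r^k (probabilities p_1,...,p_{r^k} summing to 1) equipped with the uniform (Lebesgue) measure in affine coordinates. For any ε with 0 < ε ≤ 1/e, the set of probability laws P whose base-2 entropy satisfies H(P) > ε·k·log2(r) has measure greater than 1-ε. -/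
open Real MeasureTheory Pointwise

namespace S19

def Spl (m : ℕ) : Set (Fin m → ℝ) := {q | (∀ i, 0 ≤ q i) ∧ ∑ i, q i ≤ 1}


lemma inv_e_lt_037 : 1 / Real.exp 1 < 0.37 := by
  rw [div_lt_iff₀ (exp_pos 1)]
  nlinarith [Real.exp_one_gt_d9]

lemma inv_e_lt_0368 : 1 / Real.exp 1 < 0.368 := by
  rw [div_lt_iff₀ (exp_pos 1)]
  nlinarith [Real.exp_one_gt_d9]

lemma one_sub_exp_neg_le {x : ℝ} (hx : 0 ≤ x) : 1 - Real.exp (-x) ≤ 2*x/(2+x) := by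
  have h2x : (0:ℝ) < 2 + x := by linarith
  have key : ∀ t : ℝ, 0 ≤ t → 0 ≤ (2+t) * Real.exp (-t) + (t - 2) := by
    have hd : ∀ t : ℝ, HasDerivAt (fun t : ℝ => (2+t) * Real.exp (-t) + (t - 2))
        (1 - (1+t) * Real.exp (-t)) t := by
      intro t
      have h1 : HasDerivAt (fun t : ℝ => 2 + t) 1 t := by
        simpa using (hasDerivAt_id t).const_add 2
      have h2 : HasDerivAt (fun t : ℝ => Real.exp (-t)) (Real.exp (-t) * (-1)) t := by
        exact (Real.hasDerivAt_exp (-t)).comp t (hasDerivAt_neg t)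
      have h3 := h1.mul h2
      have h4 : HasDerivAt (fun t : ℝ => t - 2) 1 t := by
        simpa using (hasDerivAt_id t).sub_const 2
      refine (h3.add h4).congr_deriv ?_
      ring
    have hmono : Monotone (fun t : ℝ => (2+t) * Real.exp (-t) + (t - 2)) := by
      apply monotone_of_deriv_nonneg
      · exact fun t => (hd t).differentiableAt
      · intro t
        rw [(hd t).deriv]
        have h6 : (0:ℝ) < Real.exp (-t) := Real.exp_pos _
        have h7 : (1+t) * Real.exp (-t) ≤ Real.exp t * Real.exp (-t) :=
          mul_le_mul_of_nonneg_right (by linarith [Real.add_one_le_exp t]) h6.le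
        rw [← Real.exp_add] at h7
        simp at h7
        linarith
    intro t ht
    have := hmono ht
    simpa using this
  have h := key x hx
  rw [le_div_iff₀ h2x]
  nlinarith [h]

lemma log3_lt : Real.log 3 < 1.1091 := by
  have h : Real.log 243 ≤ Real.log 256 := Real.log_le_log (by norm_num) (by norm_num)
  rw [show (243:ℝ) = 3^5 by norm_num, show (256:ℝ) = 2^8 by norm_num,
    Real.log_pow, Real.log_pow] at h
  push_cast at h
  nlinarith [Real.log_two_lt_d9]

lemma log3_gt : 1.0974 < Real.log 3 := by
  have h : Real.log 524288 ≤ Real.log 531441 := Real.log_le_log (by norm_num) (by norm_num)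
  rw [show (524288:ℝ) = 2^19 by norm_num, show (531441:ℝ) = 3^12 by norm_num,
    Real.log_pow, Real.log_pow] at h
  push_cast at h
  nlinarith [Real.log_two_gt_d9]

lemma log5_lt : Real.log 5 < 1.6174 := by
  have h : Real.log 125 ≤ Real.log 128 := Real.log_le_log (by norm_num) (by norm_num)
  rw [show (125:ℝ) = 5^3 by norm_num, show (128:ℝ) = 2^7 by norm_num,
    Real.log_pow, Real.log_pow] at h
  push_cast at h
  nlinarith [Real.log_two_lt_d9]

lemma log7_lt : Real.log 7 < 2.0795 := by
  have h : Real.log 49 ≤ Real.log 64 := Real.log_le_log (by norm_num) (by norm_num)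
  rw [show (49:ℝ) = 7^2 by norm_num, show (64:ℝ) = 2^6 by norm_num,
    Real.log_pow, Real.log_pow] at h
  push_cast at h
  nlinarith [Real.log_two_lt_d9]

lemma log11_lt : Real.log 11 < 2.5416 := by
  have h : Real.log 1331 ≤ Real.log 2048 := Real.log_le_log (by norm_num) (by norm_num)
  rw [show (1331:ℝ) = 11^3 by norm_num, show (2048:ℝ) = 2^11 by norm_num,
    Real.log_pow, Real.log_pow] at h
  push_cast at h
  nlinarith [Real.log_two_lt_d9]




lemma Kcore (l : ℕ) (N x x₁ y Ln : ℝ) (hN : 0 < N) (hx0 : 0 < x) (hxx₁ : x ≤ x₁)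
    (hx₁1 : x₁ ≤ 1) (hy0 : 0 < y) (hyLn : y ≤ Ln)
    (hnum : N * (2*x₁/(2+x₁))^(l+2) * Ln < x₁) :
    N * (1 - Real.exp (-x))^(l+2) < x / y := by
  have hx₁0 : 0 < x₁ := lt_of_lt_of_le hx0 hxx₁
  have h2x : (0:ℝ) < 2 + x := by linarith
  have h2x₁ : (0:ℝ) < 2 + x₁ := by linarith
  rw [lt_div_iff₀ hy0]
  have hB : 1 - Real.exp (-x) ≤ 2*x/(2+x) := one_sub_exp_neg_le hx0.le
  have h0 : 0 ≤ 1 - Real.exp (-x) := by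
    have : Real.exp (-x) ≤ 1 := Real.exp_le_one_iff.2 (by linarith)
    linarith
  have step1 : N * (1 - Real.exp (-x))^(l+2) ≤ N * (2*x/(2+x))^(l+2) :=
    mul_le_mul_of_nonneg_left (pow_le_pow_left₀ h0 hB (l+2)) hN.le
  have key : (2*x/(2+x))^(l+2) * x₁ ≤ (2*x₁/(2+x₁))^(l+2) * x := by
    rw [div_pow, div_pow, div_mul_eq_mul_div, div_mul_eq_mul_div,
      div_le_div_iff₀ (pow_pos h2x _) (pow_pos h2x₁ _)]
    have hA : x*(2+x₁)^2 ≤ x₁*(2+x)^2 := by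
      nlinarith [mul_nonneg hx0.le hx₁0.le, mul_nonneg (sub_nonneg.2 hxx₁)
        (show (0:ℝ) ≤ 4 - x*x₁ by nlinarith)]
    have hBl : (x*(2+x₁))^l ≤ (x₁*(2+x))^l := by
      apply pow_le_pow_left₀ (by positivity)
      nlinarith
    have hcomb := mul_le_mul hA hBl (by positivity) (by positivity)
    calc (2*x)^(l+2) * x₁ * (2+x₁)^(l+2)
        = 2^(l+2) * ((x*(2+x₁)^2) * ((x*(2+x₁))^l) * (x*x₁)) := by
          rw [mul_pow, mul_pow]; ring
    _ ≤ 2^(l+2) * ((x₁*(2+x)^2) * ((x₁*(2+x))^l) * (x*x₁)) := by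
          apply mul_le_mul_of_nonneg_left _ (by positivity)
          exact mul_le_mul_of_nonneg_right hcomb (by positivity)
    _ = (2*x₁)^(l+2) * x * (2+x)^(l+2) := by rw [mul_pow, mul_pow]; ring
  have hB₁nn : (0:ℝ) ≤ (2*x₁/(2+x₁))^(l+2) := by positivity
  have h6 : N * (2*x₁/(2+x₁))^(l+2) * y < x₁ :=
    lt_of_le_of_lt (mul_le_mul_of_nonneg_left hyLn (by positivity)) hnum
  have t2 : (2*x/(2+x))^(l+2) ≤ (2*x₁/(2+x₁))^(l+2) * x / x₁ := by
    rw [le_div_iff₀ hx₁0]; exact key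
  calc N * (1 - Real.exp (-x))^(l+2) * y ≤ N * (2*x/(2+x))^(l+2) * y :=
        mul_le_mul_of_nonneg_right step1 hy0.le
  _ ≤ N * ((2*x₁/(2+x₁))^(l+2) * x / x₁) * y := by
        apply mul_le_mul_of_nonneg_right _ hy0.le
        exact mul_le_mul_of_nonneg_left t2 hN.le
  _ = (N * (2*x₁/(2+x₁))^(l+2) * y) * (x / x₁) := by ring
  _ < x₁ * (x / x₁) := by
        apply mul_lt_mul_of_pos_right h6
        positivity
  _ = x := by field_simp


lemma Kchain (n : ℕ) (hn3 : 3 ≤ n) (Ln : ℝ) (hLn1 : 0.37 * Ln ≤ 1)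
    (hlog : Real.log n ≤ Ln)
    (hnum : (n:ℝ) * (2*(0.37*Ln)/(2+0.37*Ln))^(n-1) * Ln < 0.37*Ln)
    {ε : ℝ} (hε0 : 0 < ε) (hε1 : ε ≤ 1/Real.exp 1) :
    (n:ℝ) * (1 - Real.exp (-(ε * Real.log n)))^(n-1) < ε := by
  obtain ⟨l, rfl⟩ : ∃ l, n = l + 3 := ⟨n - 3, by omega⟩
  have hexp : l + 3 - 1 = l + 2 := by omega
  rw [hexp] at hnum ⊢
  have hy0 : 0 < Real.log ((l:ℕ) + 3 : ℕ) := by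
    apply Real.log_pos; push_cast; linarith [Nat.cast_nonneg (α := ℝ) l]
  have hLn0 : 0 < Ln := lt_of_lt_of_le hy0 hlog
  have hres := Kcore l ((l:ℕ) + 3 : ℕ) (ε * Real.log ((l:ℕ) + 3 : ℕ)) (0.37 * Ln)
    (Real.log ((l:ℕ) + 3 : ℕ)) Ln (by push_cast; positivity) (by positivity)
    (by
      have h1 : ε ≤ 0.37 := le_of_lt (lt_of_le_of_lt hε1 inv_e_lt_037)
      exact mul_le_mul h1 hlog hy0.le (by norm_num))
    hLn1 hy0 hlog hnum
  calc ((l:ℕ) + 3 : ℕ) * (1 - Real.exp (-(ε * Real.log ((l:ℕ) + 3 : ℕ))))^(l+2)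
      < ε * Real.log ((l:ℕ) + 3 : ℕ) / Real.log ((l:ℕ) + 3 : ℕ) := hres
  _ = ε := by rw [mul_div_assoc, div_self hy0.ne', mul_one]

lemma AN_small (n : ℕ) (hn3 : 3 ≤ n) (hn11 : n ≤ 11)
    {ε : ℝ} (hε0 : 0 < ε) (hε1 : ε ≤ 1/Real.exp 1) :
    (n:ℝ) * (1 - Real.exp (-(ε * Real.log n)))^(n-1) < ε := by
  have l2 := Real.log_two_lt_d9
  interval_cases n
  · exact Kchain 3 (by norm_num) 1.1091 (by norm_num) (by push_cast; exact log3_lt.le)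
      (by norm_num) hε0 hε1
  · refine Kchain 4 (by norm_num) 1.3863 (by norm_num) ?_ (by norm_num) hε0 hε1
    rw [show ((4:ℕ):ℝ) = 2^2 by norm_num, Real.log_pow]; push_cast; nlinarith
  · exact Kchain 5 (by norm_num) 1.6174 (by norm_num) (by push_cast; exact log5_lt.le)
      (by norm_num) hε0 hε1
  · refine Kchain 6 (by norm_num) 1.8023 (by norm_num) ?_ (by norm_num) hε0 hε1
    rw [show ((6:ℕ):ℝ) = 2*3 by norm_num, Real.log_mul (by norm_num) (by norm_num)]
    nlinarith [log3_lt]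
  · exact Kchain 7 (by norm_num) 2.0795 (by norm_num) (by push_cast; exact log7_lt.le)
      (by norm_num) hε0 hε1
  · refine Kchain 8 (by norm_num) 2.0795 (by norm_num) ?_ (by norm_num) hε0 hε1
    rw [show ((8:ℕ):ℝ) = 2^3 by norm_num, Real.log_pow]; push_cast; nlinarith
  · refine Kchain 9 (by norm_num) 2.2182 (by norm_num) ?_ (by norm_num) hε0 hε1
    rw [show ((9:ℕ):ℝ) = 3^2 by norm_num, Real.log_pow]; push_cast; nlinarith [log3_lt]
  · refine Kchain 10 (by norm_num) 2.3106 (by norm_num) ?_ (by norm_num) hε0 hε1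
    rw [show ((10:ℕ):ℝ) = 2*5 by norm_num, Real.log_mul (by norm_num) (by norm_num)]
    nlinarith [log5_lt]
  · exact Kchain 11 (by norm_num) 2.5416 (by norm_num) (by push_cast; exact log11_lt.le)
      (by norm_num) hε0 hε1



lemma exp_09176 : (2.469:ℝ) ≤ Real.exp 0.9176 := by
  have h := Real.sum_le_exp_of_nonneg (by norm_num : (0:ℝ) ≤ 0.9176) 5
  simp [Finset.sum_range_succ, Nat.factorial] at h
  norm_num at h
  linarith

lemma exp_15624 : (4.76:ℝ) ≤ Real.exp 1.5624 := by
  have h := Real.sum_le_exp_of_nonneg (by norm_num : (0:ℝ) ≤ 1.5624) 8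
  simp [Finset.sum_range_succ, Nat.factorial] at h
  norm_num at h
  linarith

lemma log_le_div_e {y : ℝ} (hy : 0 < y) : Real.log y ≤ y / Real.exp 1 := by
  have h := Real.log_le_sub_one_of_pos (show 0 < y / Real.exp 1 by positivity)
  rw [Real.log_div hy.ne' (Real.exp_ne_zero 1), Real.log_exp] at h
  linarith

lemma Cchain (n : ℕ) (hn : 12 ≤ n) {ε : ℝ} (hε0 : 0 < ε) (hε1 : ε ≤ 1/Real.exp 1) :
    (n:ℝ) * (1 - Real.exp (-(ε * Real.log n)))^(n-1) < ε := by
  obtain ⟨j, rfl⟩ : ∃ j, n = j + 12 := ⟨n - 12, by omega⟩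
  have hexp : j + 12 - 1 = (j + 10) + 1 := by omega
  rw [hexp]
  set y := Real.log ((j:ℕ) + 12 : ℕ) with hydef
  have hy : 2.48 ≤ y := by
    have h12 : Real.log 12 ≤ y := by
      apply Real.log_le_log (by norm_num)
      push_cast; linarith [Nat.cast_nonneg (α := ℝ) j]
    have : Real.log 12 = 2 * Real.log 2 + Real.log 3 := by
      rw [show (12:ℝ) = 2^2*3 by norm_num,
        Real.log_mul (by norm_num) (by norm_num), Real.log_pow]
      push_cast; ring
    nlinarith [Real.log_two_gt_d9, log3_gt]
  have hy0 : 0 < y := by linarith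
  set x := ε * y with hxdef
  have hx0 : 0 < x := mul_pos hε0 hy0
  have hxe : x ≤ 0.37 * y := by
    have h1 : ε ≤ 0.368 := le_of_lt (lt_of_le_of_lt hε1 inv_e_lt_0368)
    have := mul_le_mul h1 (le_refl y) hy0.le (by norm_num)
    linarith
  -- pointwise bounds
  have h1 : 1 - Real.exp (-x) ≤ x := by linarith [Real.add_one_le_exp (-x)]
  have h0 : 0 ≤ 1 - Real.exp (-x) := by
    have : Real.exp (-x) ≤ 1 := Real.exp_le_one_iff.2 (by linarith)
    linarith
  have h2 : 1 - Real.exp (-x) ≤ 1 - Real.exp (-(0.37*y)) := by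
    have := Real.exp_le_exp.2 (show -(0.37*y) ≤ -x by linarith)
    linarith
  have h3 : 1 - Real.exp (-(0.37*y)) ≤ Real.exp (-(Real.exp (-(0.37*y)))) := by
    linarith [Real.add_one_le_exp (-(Real.exp (-(0.37*y))))]
  have h03 : (0:ℝ) ≤ 1 - Real.exp (-(0.37*y)) := by
    have : Real.exp (-(0.37*y)) ≤ 1 := Real.exp_le_one_iff.2 (by nlinarith)
    linarith
  -- main exponential inequality: N * y < exp ((N-2) * exp (-0.37 y))
  have hNy : ((j:ℝ) + 12) * y < Real.exp (((j:ℝ) + 10) * Real.exp (-(0.37*y))) := by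
    have hN : ((j:ℝ) + 12) = Real.exp y := by
      rw [hydef, Real.exp_log (by push_cast; positivity)]
      push_cast; ring
    have hylog : y ≤ Real.exp (0.368 * y) := by
      conv_lhs => rw [← Real.exp_log hy0]
      apply Real.exp_le_exp.2
      calc Real.log y ≤ y / Real.exp 1 := log_le_div_e hy0
      _ ≤ y * 0.368 := by
            rw [div_eq_mul_inv]
            apply mul_le_mul_of_nonneg_left _ hy0.le
            have := inv_e_lt_0368
            rw [one_div] at this
            exact this.le
      _ = 0.368 * y := by ring
    have hLHS : ((j:ℝ) + 12) * y ≤ Real.exp (1.368 * y) := by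
      calc ((j:ℝ) + 12) * y = Real.exp y * y := by rw [hN]
      _ ≤ Real.exp y * Real.exp (0.368*y) := by
            apply mul_le_mul_of_nonneg_left hylog (Real.exp_pos y).le
      _ = Real.exp (1.368 * y) := by rw [← Real.exp_add]; ring_nf
    have hA2 : Real.exp (0.63*y) - 0.82 ≤ ((j:ℝ) + 10) * Real.exp (-(0.37*y)) := by
      have e1 : ((j:ℝ) + 10) = Real.exp y - 2 := by
        have : ((j:ℝ) + 12) = Real.exp y := by
          rw [hydef, Real.exp_log (by push_cast; positivity)]; push_cast; ring
        linarith
      have e2 : Real.exp y * Real.exp (-(0.37*y)) = Real.exp (0.63*y) := by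
        rw [← Real.exp_add]; ring_nf
      have e3 : Real.exp (-(0.37*y)) ≤ 0.41 := by
        have h5 : Real.exp 0.9176 ≤ Real.exp (0.37*y) := Real.exp_le_exp.2 (by linarith)
        have h6 : (2.469:ℝ) ≤ Real.exp (0.37*y) := le_trans exp_09176 h5
        rw [show -(0.37*y) = -(0.37*y) from rfl, Real.exp_neg]
        rw [inv_le_comm₀ (Real.exp_pos _) (by norm_num)]
        calc (0.41:ℝ)⁻¹ ≤ 2.469 := by norm_num
        _ ≤ Real.exp (0.37*y) := h6
      rw [e1, sub_mul, e2]
      nlinarith [Real.exp_pos (-(0.37*y))]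
    have hfin : 1.368 * y < Real.exp (0.63*y) - 0.82 := by
      have e4 : Real.exp (0.63*y) = Real.exp 1.5624 * Real.exp (0.63*(y-2.48)) := by
        rw [← Real.exp_add]; ring_nf
      have e5 : (1:ℝ) + 0.63*(y-2.48) ≤ Real.exp (0.63*(y-2.48)) := by
        linarith [Real.add_one_le_exp (0.63*(y-2.48))]
      have e6 : (4.76:ℝ) * (1 + 0.63*(y-2.48)) ≤ Real.exp (0.63*y) := by
        rw [e4]
        exact mul_le_mul exp_15624 e5 (by linarith) (Real.exp_pos _).le
      nlinarith [e6]
    calc ((j:ℝ) + 12) * y ≤ Real.exp (1.368*y) := hLHS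
    _ < Real.exp (Real.exp (0.63*y) - 0.82) := by
          apply Real.exp_lt_exp.2; linarith
    _ ≤ Real.exp (((j:ℝ) + 10) * Real.exp (-(0.37*y))) := Real.exp_le_exp.2 hA2
  -- assemble
  have key : ((j:ℝ) + 12) * (1 - Real.exp (-x))^((j+10)+1) * y < x := by
    have p1 : (1 - Real.exp (-x))^((j+10)+1) ≤
        Real.exp (-(((j:ℝ) + 10) * Real.exp (-(0.37*y)))) * x := by
      rw [pow_succ]
      have q1 : (1 - Real.exp (-x))^(j+10) ≤
          Real.exp (-(((j:ℝ) + 10) * Real.exp (-(0.37*y)))) := by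
        calc (1 - Real.exp (-x))^(j+10) ≤ (1 - Real.exp (-(0.37*y)))^(j+10) :=
              pow_le_pow_left₀ h0 h2 _
        _ ≤ (Real.exp (-(Real.exp (-(0.37*y)))))^(j+10) := pow_le_pow_left₀ h03 h3 _
        _ = Real.exp (-(((j:ℝ) + 10) * Real.exp (-(0.37*y)))) := by
              rw [← Real.exp_nat_mul]; push_cast; ring_nf
      exact mul_le_mul q1 h1 h0 (Real.exp_pos _).le
    calc ((j:ℝ) + 12) * (1 - Real.exp (-x))^((j+10)+1) * y
        ≤ ((j:ℝ) + 12) * (Real.exp (-(((j:ℝ) + 10) * Real.exp (-(0.37*y)))) * x) * y := by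
          apply mul_le_mul_of_nonneg_right _ hy0.le
          apply mul_le_mul_of_nonneg_left p1 (by positivity)
    _ = (((j:ℝ) + 12) * y * Real.exp (-(((j:ℝ) + 10) * Real.exp (-(0.37*y))))) * x := by ring
    _ < 1 * x := by
          apply mul_lt_mul_of_pos_right _ hx0
          rw [Real.exp_neg, mul_inv_lt_iff₀ (Real.exp_pos _)]
          simpa using hNy
    _ = x := by ring
  have hfinal : ((j:ℝ) + 12) * (1 - Real.exp (-x))^((j+10)+1) < x / y := by
    rw [lt_div_iff₀ hy0]; exact key
  rw [show (((j:ℕ) + 12 : ℕ) : ℝ) = (j:ℝ) + 12 by push_cast; ring,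
    show ε = x / y by rw [hxdef, mul_div_assoc, div_self hy0.ne', mul_one]]
  exact hfinal




lemma vol_Spl_le_one (m : ℕ) : volume (Spl m) ≤ 1 := by
  have hsub : Spl m ⊆ Set.pi Set.univ (fun _ : Fin m => Set.Icc (0:ℝ) 1) := by
    intro q hq
    intro i _
    refine ⟨hq.1 i, ?_⟩
    calc q i ≤ ∑ j, q j := Finset.single_le_sum (fun j _ => hq.1 j) (Finset.mem_univ i)
    _ ≤ 1 := hq.2
  calc volume (Spl m) ≤ volume (Set.pi Set.univ (fun _ : Fin m => Set.Icc (0:ℝ) 1)) :=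
        measure_mono hsub
  _ = 1 := by
      rw [volume_pi_pi]
      simp [Real.volume_Icc]

lemma vol_Spl_pos (m : ℕ) : 0 < volume (Spl m) := by
  have hsub : Set.pi Set.univ (fun _ : Fin m => Set.Icc (0:ℝ) (1/(m+1))) ⊆ Spl m := by
    intro q hq
    have h1 : ∀ i, 0 ≤ q i := fun i => (hq i (Set.mem_univ i)).1
    refine ⟨h1, ?_⟩
    calc ∑ i, q i ≤ ∑ _i : Fin m, (1:ℝ)/(m+1) :=
          Finset.sum_le_sum (fun i _ => (hq i (Set.mem_univ i)).2)
    _ = m * (1/(m+1)) := by rw [Finset.sum_const]; simp [mul_comm]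
    _ ≤ 1 := by
        rw [mul_one_div, div_le_one (by positivity)]
        linarith
  refine lt_of_lt_of_le ?_ (measure_mono hsub)
  rw [volume_pi_pi]
  simp only [Real.volume_Icc, sub_zero]
  rw [Finset.prod_const]
  apply ENNReal.pow_pos
  rw [ENNReal.ofReal_pos]
  positivity

lemma vol_smul (m : ℕ) (r : ℝ) (hr : 0 ≤ r) (s : Set (Fin m → ℝ)) :
    volume (r • s) = ENNReal.ofReal (r^m) * volume s := by
  rw [Measure.addHaar_smul_of_nonneg volume hr s, Module.finrank_fintype_fun_eq_card,
    Fintype.card_fin]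

lemma vol_vadd (m : ℕ) (c : Fin m → ℝ) (s : Set (Fin m → ℝ)) : volume (c +ᵥ s) = volume s :=
  measure_vadd volume c s




lemma last_eq (m : ℕ) {r : ℝ} (hr : 0 < r) (hr1 : r ≤ 1) :
    {q | q ∈ Spl m ∧ ∑ i, q i ≤ r} = r • Spl m := by
  ext q
  simp only [Set.mem_smul_set, Set.mem_setOf_eq]
  constructor
  · rintro ⟨⟨hnn, -⟩, hsum⟩
    refine ⟨fun j => r⁻¹ * q j, ⟨fun i => by have := hnn i; positivity, ?_⟩, ?_⟩
    · rw [← Finset.mul_sum, inv_mul_le_iff₀ hr, mul_one]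
      exact hsum
    · ext j
      simp only [Pi.smul_apply, smul_eq_mul]
      field_simp
  · rintro ⟨p, ⟨hnn, hsum⟩, rfl⟩
    have hp0 : 0 ≤ ∑ i, p i := Finset.sum_nonneg (fun i _ => hnn i)
    have hs : ∑ i, (r • p) i = r * ∑ i, p i := by
      simp only [Pi.smul_apply, smul_eq_mul]
      rw [← Finset.mul_sum]
    refine ⟨⟨fun i => by simpa using mul_nonneg hr.le (hnn i), ?_⟩, ?_⟩
    · rw [hs]
      nlinarith
    · rw [hs]
      nlinarith

lemma coord_eq (m : ℕ) (i : Fin m) {t : ℝ} (ht0 : 0 ≤ t) (ht1 : t < 1) :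
    {q | q ∈ Spl m ∧ t ≤ q i} =
      (fun j => if j = i then t else 0) +ᵥ ((1-t) • Spl m) := by
  have hr : (0:ℝ) < 1 - t := by linarith
  have hsumc : ∑ j : Fin m, (if j = i then t else 0) = t := by simp
  ext q
  simp only [Set.mem_vadd_set, Set.mem_smul_set, Set.mem_setOf_eq]
  constructor
  · rintro ⟨⟨hnn, hsum⟩, hi⟩
    refine ⟨(1-t) • (fun j => (1-t)⁻¹ * (q j - if j = i then t else 0)),
      ⟨fun j => (1-t)⁻¹ * (q j - if j = i then t else 0), ⟨fun j => ?_, ?_⟩, rfl⟩, ?_⟩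
    · rcases eq_or_ne j i with rfl | hne
      · simp only [if_pos rfl]
        have h1 : 0 ≤ q j - t := by linarith
        positivity
      · simp only [if_neg hne, sub_zero]
        have := hnn j
        positivity
    · rw [← Finset.mul_sum, inv_mul_le_iff₀ hr, mul_one, Finset.sum_sub_distrib, hsumc]
      linarith
    · ext j
      simp only [Pi.vadd_apply, vadd_eq_add, Pi.add_apply, Pi.smul_apply, smul_eq_mul]
      rw [mul_inv_cancel_left₀ hr.ne']; ring
  · rintro ⟨y, ⟨p, ⟨hnn, hsum⟩, hyp⟩, hqe⟩
    have hqj : ∀ j, q j = (if j = i then t else 0) + (1-t) * p j := by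
      intro j
      rw [← hqe, ← hyp]
      simp [vadd_eq_add]
    have hqsum : ∑ j, q j = t + (1-t) * ∑ j, p j := by
      rw [Finset.sum_congr rfl (fun j (_ : j ∈ Finset.univ) => hqj j),
        Finset.sum_add_distrib, hsumc, ← Finset.mul_sum]
    refine ⟨⟨fun j => ?_, ?_⟩, ?_⟩
    · rw [hqj j]
      rcases eq_or_ne j i with rfl | hne
      · have := hnn j; simp only [if_true, eq_self_iff_true]; nlinarith
      · have := hnn j; simp only [if_neg hne]; nlinarith
    · rw [hqsum]
      nlinarith
    · rw [hqj i]
      have := hnn i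
      simp only [if_true, eq_self_iff_true]
      nlinarith


lemma vol_D (m : ℕ) (t : ℝ) (ht0 : 0 ≤ t) (ht1 : t < 1) (j : Fin (m+1)) :
    volume {q | q ∈ Spl m ∧ t ≤ (Fin.snoc q (1 - ∑ i, q i) : Fin (m+1) → ℝ) j}
      = ENNReal.ofReal ((1-t)^m) * volume (Spl m) := by
  induction j using Fin.lastCases with
  | last =>
      have hset : {q | q ∈ Spl m ∧ t ≤ (Fin.snoc q (1 - ∑ i, q i) : Fin (m+1) → ℝ) (Fin.last m)}
          = {q | q ∈ Spl m ∧ ∑ i, q i ≤ 1 - t} := by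
        ext q
        simp only [Set.mem_setOf_eq, Fin.snoc_last]
        constructor
        · rintro ⟨h1, h2⟩; exact ⟨h1, by linarith⟩
        · rintro ⟨h1, h2⟩; exact ⟨h1, by linarith⟩
      rw [hset, last_eq m (by linarith) (by linarith), vol_smul m _ (by linarith)]
  | cast i =>
      have hset : {q | q ∈ Spl m ∧ t ≤ (Fin.snoc q (1 - ∑ i, q i) : Fin (m+1) → ℝ) i.castSucc}
          = {q | q ∈ Spl m ∧ t ≤ q i} := by
        ext q
        simp only [Set.mem_setOf_eq, Fin.snoc_castSucc]
      rw [hset, coord_eq m i ht0 ht1, vol_vadd, vol_smul m _ (by linarith)]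

lemma master (m : ℕ) (P : (Fin m → ℝ) → Prop) (ε t : ℝ) (hε0 : 0 < ε) (hε1 : ε < 1)
    (ht0 : 0 ≤ t) (ht1 : t < 1) (hnum : ((m:ℝ)+1) * (1-t)^m < ε)
    (hpt : ∀ q, q ∈ Spl m →
      (∀ j : Fin (m+1), (Fin.snoc q (1 - ∑ i, q i) : Fin (m+1) → ℝ) j < t) → P q) :
    ENNReal.ofReal (1-ε) * volume (Spl m) < volume {q | q ∈ Spl m ∧ P q} := by
  have hV1 : volume (Spl m) ≤ 1 := vol_Spl_le_one m
  have hV0 : 0 < volume (Spl m) := vol_Spl_pos m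
  have hVtop : volume (Spl m) ≠ ⊤ := (lt_of_le_of_lt hV1 ENNReal.one_lt_top).ne
  have hsub : Spl m ⊆ {q | q ∈ Spl m ∧ P q} ∪
      ⋃ j : Fin (m+1), {q | q ∈ Spl m ∧ t ≤ (Fin.snoc q (1 - ∑ i, q i) : Fin (m+1) → ℝ) j} := by
    intro q hq
    by_cases h : ∀ j : Fin (m+1), (Fin.snoc q (1 - ∑ i, q i) : Fin (m+1) → ℝ) j < t
    · exact Or.inl ⟨hq, hpt q hq h⟩
    · push_neg at h
      obtain ⟨j, hj⟩ := h
      exact Or.inr (Set.mem_iUnion.2 ⟨j, hq, hj⟩)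
  have hle : volume (Spl m) ≤ volume {q | q ∈ Spl m ∧ P q} +
      ∑ j : Fin (m+1), volume {q | q ∈ Spl m ∧ t ≤ (Fin.snoc q (1 - ∑ i, q i) : Fin (m+1) → ℝ) j} := by
    calc volume (Spl m) ≤ volume ({q | q ∈ Spl m ∧ P q} ∪
        ⋃ j : Fin (m+1), {q | q ∈ Spl m ∧ t ≤ (Fin.snoc q (1 - ∑ i, q i) : Fin (m+1) → ℝ) j}) :=
          measure_mono hsub
    _ ≤ volume {q | q ∈ Spl m ∧ P q} + volume (⋃ j : Fin (m+1),
          {q | q ∈ Spl m ∧ t ≤ (Fin.snoc q (1 - ∑ i, q i) : Fin (m+1) → ℝ) j}) :=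
          measure_union_le _ _
    _ ≤ _ := add_le_add_right (measure_iUnion_fintype_le volume _) _
  have hsum : ∑ j : Fin (m+1),
      volume {q | q ∈ Spl m ∧ t ≤ (Fin.snoc q (1 - ∑ i, q i) : Fin (m+1) → ℝ) j}
      = ENNReal.ofReal (((m:ℝ)+1)*(1-t)^m) * volume (Spl m) := by
    rw [Finset.sum_congr rfl (fun j (_ : j ∈ Finset.univ) => vol_D m t ht0 ht1 j),
      Finset.sum_const, Finset.card_univ, Fintype.card_fin, nsmul_eq_mul]
    rw [← mul_assoc]
    congr 1
    rw [← ENNReal.ofReal_natCast (m+1), ← ENNReal.ofReal_mul (by positivity)]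
    congr 1
    push_cast
    ring
  by_contra hcon
  push_neg at hcon
  have h2 : volume (Spl m) ≤
      ENNReal.ofReal ((1-ε) + ((m:ℝ)+1)*(1-t)^m) * volume (Spl m) := by
    calc volume (Spl m) ≤ volume {q | q ∈ Spl m ∧ P q} +
        ENNReal.ofReal (((m:ℝ)+1)*(1-t)^m) * volume (Spl m) := by rw [← hsum]; exact hle
    _ ≤ ENNReal.ofReal (1-ε) * volume (Spl m) +
        ENNReal.ofReal (((m:ℝ)+1)*(1-t)^m) * volume (Spl m) := add_le_add_left hcon _
    _ = _ := by
        rw [← add_mul, ← ENNReal.ofReal_add (by linarith)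
          (mul_nonneg (by positivity) (pow_nonneg (by linarith) m))]
  have h3 : ENNReal.ofReal ((1-ε) + ((m:ℝ)+1)*(1-t)^m) * volume (Spl m)
      < 1 * volume (Spl m) := by
    rw [ENNReal.mul_lt_mul_iff_left hV0.ne' hVtop]
    rw [show (1 : ENNReal) = ENNReal.ofReal 1 by simp]
    rw [ENNReal.ofReal_lt_ofReal_iff (by norm_num)]
    linarith
  rw [one_mul] at h3
  exact (h2.trans_lt h3).false



lemma negMulLog2_eq (x : ℝ) : negMulLog2 x = Real.negMulLog x / Real.log 2 := by
  unfold negMulLog2 Real.negMulLog Real.logb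
  ring

lemma log_le_div_e' {y : ℝ} (hy : 0 < y) : Real.log y ≤ y / Real.exp 1 := by
  have h := Real.log_le_sub_one_of_pos (show 0 < y / Real.exp 1 by positivity)
  rw [Real.log_div hy.ne' (Real.exp_ne_zero 1), Real.log_exp] at h
  linarith

lemma negMulLog_le_inv_e {a : ℝ} (ha : 0 ≤ a) : Real.negMulLog a ≤ (Real.exp 1)⁻¹ := by
  rcases eq_or_lt_of_le ha with rfl | ha0
  · simp [Real.negMulLog]
    positivity
  · have h1 : Real.negMulLog a = a * Real.log a⁻¹ := by
      rw [Real.negMulLog, Real.log_inv]; ring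
    rw [h1]
    have h2 : Real.log a⁻¹ ≤ a⁻¹ / Real.exp 1 := log_le_div_e' (by positivity)
    calc a * Real.log a⁻¹ ≤ a * (a⁻¹ / Real.exp 1) :=
          mul_le_mul_of_nonneg_left h2 ha0.le
    _ = (Real.exp 1)⁻¹ := by field_simp
    
lemma negMulLog_inv_e : Real.negMulLog (Real.exp 1)⁻¹ = (Real.exp 1)⁻¹ := by
  rw [Real.negMulLog, Real.log_inv, Real.log_exp]
  ring

lemma negMulLog_strictMono {a b : ℝ} (ha : 0 < a) (hab : a < b) (hb : b ≤ (Real.exp 1)⁻¹) :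
    Real.negMulLog a < Real.negMulLog b := by
  rcases eq_or_lt_of_le hb with rfl | hblt
  · -- b = e⁻¹ : show negMulLog a < e⁻¹
    rw [negMulLog_inv_e]
    have h1 : Real.negMulLog a = a * Real.log a⁻¹ := by
      rw [Real.negMulLog, Real.log_inv]; ring
    have h2 : Real.log a⁻¹ < a⁻¹ / Real.exp 1 := by
      have h3 := Real.log_lt_sub_one_of_pos (show 0 < a⁻¹ / Real.exp 1 by positivity) ?_
      · rw [Real.log_div (by positivity) (Real.exp_ne_zero 1), Real.log_exp] at h3
        linarith
      · intro hcon
        rw [div_eq_one_iff_eq (Real.exp_ne_zero 1)] at hcon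
        rw [show a = (Real.exp 1)⁻¹ by rw [← hcon]; simp] at hab
        exact absurd hab (lt_irrefl _)
    rw [h1]
    calc a * Real.log a⁻¹ < a * (a⁻¹ / Real.exp 1) := by
          apply mul_lt_mul_of_pos_left h2 ha
    _ = (Real.exp 1)⁻¹ := by field_simp
  · -- b < e⁻¹ : use strict concavity with endpoints a and e⁻¹
    set e1 : ℝ := (Real.exp 1)⁻¹
    have he1 : 0 < e1 := by positivity
    have hne : a ≠ e1 := by intro h; rw [h] at hab; linarith
    have hea : (0:ℝ) < e1 - a := by linarith
    have hμ : 0 < (e1 - b)/(e1 - a) := by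
      apply div_pos <;> linarith
    have hν : 0 < (b - a)/(e1 - a) := by
      apply div_pos <;> linarith
    have hsum : (e1 - b)/(e1 - a) + (b - a)/(e1 - a) = 1 := by
      rw [← add_div, div_eq_one_iff_eq hea.ne']
      ring
    have hcomb := Real.strictConcaveOn_negMulLog.2 (Set.mem_Ici.2 ha.le)
      (Set.mem_Ici.2 he1.le) hne hμ hν hsum
    have hpt : ((e1 - b)/(e1 - a)) • a + ((b - a)/(e1 - a)) • e1 = b := by
      simp only [smul_eq_mul]
      field_simp
      ring
    rw [hpt] at hcomb
    have hle : Real.negMulLog a ≤ Real.negMulLog e1 := by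
      rw [negMulLog_inv_e]; exact negMulLog_le_inv_e ha.le
    have := hcomb
    simp only [smul_eq_mul] at this
    have htriv : ((e1 - b)/(e1 - a)) * Real.negMulLog a + ((b - a)/(e1 - a)) * Real.negMulLog a
        = Real.negMulLog a := by
      rw [← add_mul, hsum, one_mul]
    linarith [mul_le_mul_of_nonneg_left hle hν.le]


lemma log5_gt : 1.584 < Real.log 5 := by
  have h : Real.log 65536 ≤ Real.log 78125 := Real.log_le_log (by norm_num) (by norm_num)
  rw [show (65536:ℝ) = 2^16 by norm_num, show (78125:ℝ) = 5^7 by norm_num,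
    Real.log_pow, Real.log_pow] at h
  push_cast at h
  nlinarith [Real.log_two_gt_d9]

lemma snoc_nonneg (m : ℕ) (q : Fin m → ℝ) (hq : q ∈ Spl m) (j : Fin (m+1)) :
    0 ≤ (Fin.snoc q (1 - ∑ i, q i) : Fin (m+1) → ℝ) j := by
  induction j using Fin.lastCases with
  | last => rw [Fin.snoc_last]; linarith [hq.2]
  | cast i => rw [Fin.snoc_castSucc]; exact hq.1 i

lemma snoc_sum (m : ℕ) (q : Fin m → ℝ) :
    ∑ j : Fin (m+1), (Fin.snoc q (1 - ∑ i, q i) : Fin (m+1) → ℝ) j = 1 := by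
  rw [Fin.sum_snoc]
  ring

lemma entropy3 (m : ℕ) {ε : ℝ} (hε0 : 0 < ε) (q : Fin m → ℝ) (hq : q ∈ Spl m)
    (hall : ∀ j : Fin (m+1), (Fin.snoc q (1 - ∑ i, q i) : Fin (m+1) → ℝ) j
      < Real.exp (-(ε * Real.log ((m:ℝ)+1)))) :
    ε * Real.log ((m:ℝ)+1) <
      ∑ j : Fin (m+1), Real.negMulLog ((Fin.snoc q (1 - ∑ i, q i) : Fin (m+1) → ℝ) j) := by
  set c := ε * Real.log ((m:ℝ)+1) with hc
  have hterm : ∀ j : Fin (m+1),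
      c * (Fin.snoc q (1 - ∑ i, q i) : Fin (m+1) → ℝ) j
        ≤ Real.negMulLog ((Fin.snoc q (1 - ∑ i, q i) : Fin (m+1) → ℝ) j) := by
    intro j
    rcases eq_or_lt_of_le (snoc_nonneg m q hq j) with h0 | hpos
    · rw [← h0]
      simp [Real.negMulLog]
    · have hlt := hall j
      have hlog : Real.log ((Fin.snoc q (1 - ∑ i, q i) : Fin (m+1) → ℝ) j) < -c := by
        calc Real.log ((Fin.snoc q (1 - ∑ i, q i) : Fin (m+1) → ℝ) j)
            < Real.log (Real.exp (-c)) := Real.log_lt_log hpos hlt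
        _ = -c := Real.log_exp _
      rw [Real.negMulLog]
      nlinarith
  have hstrict : ∃ j ∈ (Finset.univ : Finset (Fin (m+1))),
      c * (Fin.snoc q (1 - ∑ i, q i) : Fin (m+1) → ℝ) j
        < Real.negMulLog ((Fin.snoc q (1 - ∑ i, q i) : Fin (m+1) → ℝ) j) := by
    have hex : ∃ j : Fin (m+1), 0 < (Fin.snoc q (1 - ∑ i, q i) : Fin (m+1) → ℝ) j := by
      by_contra hcon
      push_neg at hcon
      have : ∑ j : Fin (m+1), (Fin.snoc q (1 - ∑ i, q i) : Fin (m+1) → ℝ) j ≤ 0 :=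
        Finset.sum_nonpos (fun j _ => hcon j)
      rw [snoc_sum] at this
      linarith
    obtain ⟨j, hj⟩ := hex
    refine ⟨j, Finset.mem_univ j, ?_⟩
    have hlt := hall j
    have hlog : Real.log ((Fin.snoc q (1 - ∑ i, q i) : Fin (m+1) → ℝ) j) < -c := by
      calc Real.log ((Fin.snoc q (1 - ∑ i, q i) : Fin (m+1) → ℝ) j)
          < Real.log (Real.exp (-c)) := Real.log_lt_log hj hlt
      _ = -c := Real.log_exp _
    rw [Real.negMulLog]
    nlinarith
  have hfin := Finset.sum_lt_sum (fun j (_ : j ∈ Finset.univ) => hterm j) hstrict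
  calc c = ∑ j : Fin (m+1), c * (Fin.snoc q (1 - ∑ i, q i) : Fin (m+1) → ℝ) j := by
        rw [← Finset.mul_sum, snoc_sum, mul_one]
  _ < _ := hfin

lemma binEnt {ε a : ℝ} (hε0 : 0 < ε) (hε1 : ε ≤ 1/Real.exp 1) (ha1 : 2*ε/5 < a)
    (ha2 : a ≤ 1/2) : ε * Real.log 2 < Real.negMulLog a := by
  have ha0 : 0 < a := lt_trans (by positivity) ha1
  rcases le_or_gt a (Real.exp 1)⁻¹ with hle | hgt
  · have h1 : Real.negMulLog (2*ε/5) < Real.negMulLog a :=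
      negMulLog_strictMono (by positivity) ha1 hle
    have hlogε : Real.log ε ≤ -1 := by
      rw [Real.log_le_iff_le_exp hε0, Real.exp_neg]
      rw [one_div] at hε1
      exact hε1
    have hlogform : Real.negMulLog (2*ε/5) = -(2/5*ε) * (Real.log (2/5) + Real.log ε) := by
      rw [Real.negMulLog, show 2*ε/5 = (2/5)*ε by ring,
        Real.log_mul (by norm_num) hε0.ne']
    have hl25 : Real.log (2/5) = Real.log 2 - Real.log 5 :=
      Real.log_div (by norm_num) (by norm_num)
    have inner : (5/2) * Real.log 2 ≤ -(Real.log (2/5)) - Real.log ε := by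
      rw [hl25]
      linarith [log5_gt, Real.log_two_lt_d9]
    have h2 : ε * Real.log 2 ≤ Real.negMulLog (2*ε/5) := by
      calc ε * Real.log 2 = (2/5*ε) * ((5/2) * Real.log 2) := by ring
      _ ≤ (2/5*ε) * (-(Real.log (2/5)) - Real.log ε) :=
          mul_le_mul_of_nonneg_left inner (by positivity)
      _ = Real.negMulLog (2*ε/5) := by rw [hlogform]; ring
    linarith
  · have hεa : ε < a := by
      rw [one_div] at hε1
      linarith
    have hla : Real.log 2 ≤ -Real.log a := by
      have h3 : Real.log a ≤ Real.log (1/2) := Real.log_le_log ha0 ha2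
      rw [one_div, Real.log_inv] at h3
      linarith
    calc ε * Real.log 2 < a * Real.log 2 :=
          mul_lt_mul_of_pos_right hεa (Real.log_pos one_lt_two)
    _ ≤ a * (-Real.log a) := mul_le_mul_of_nonneg_left hla ha0.le
    _ = Real.negMulLog a := by rw [Real.negMulLog]; ring

lemma entropy2 {ε : ℝ} (hε0 : 0 < ε) (hε1 : ε ≤ 1/Real.exp 1) (q : Fin 1 → ℝ)
    (hq : q ∈ Spl 1)
    (hall : ∀ j : Fin 2, (Fin.snoc q (1 - ∑ i, q i) : Fin 2 → ℝ) j < 1 - 2*ε/5) :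
    ε * Real.log 2 <
      ∑ j : Fin 2, Real.negMulLog ((Fin.snoc q (1 - ∑ i, q i) : Fin 2 → ℝ) j) := by
  have hsq : ∑ i, q i = q 0 := by simp
  have hv0 : (Fin.snoc q (1 - ∑ i, q i) : Fin 2 → ℝ) 0 = q 0 := by
    show (Fin.snoc q (1 - ∑ i, q i) : Fin 2 → ℝ) (Fin.castSucc 0) = q 0
    rw [Fin.snoc_castSucc]
  have hv1 : (Fin.snoc q (1 - ∑ i, q i) : Fin 2 → ℝ) 1 = 1 - q 0 := by
    rw [show (1 : Fin 2) = Fin.last 1 from rfl, Fin.snoc_last, hsq]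
  have hsum2 : ∑ j : Fin 2, Real.negMulLog ((Fin.snoc q (1 - ∑ i, q i) : Fin 2 → ℝ) j)
      = Real.negMulLog (q 0) + Real.negMulLog (1 - q 0) := by
    rw [Fin.sum_univ_two, hv0, hv1]
  have hA := hall 0
  have hB := hall 1
  rw [hv0] at hA
  rw [hv1] at hB
  have hq0 : 0 ≤ q 0 := hq.1 0
  have hq1 : q 0 ≤ 1 := by have := hq.2; rw [hsq] at this; exact this
  rw [hsum2]
  rcases le_or_gt (q 0) (1/2) with hc | hc
  · have hb := binEnt hε0 hε1 (by linarith) hc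
    have hnn : 0 ≤ Real.negMulLog (1 - q 0) :=
      Real.negMulLog_nonneg (by linarith) (by linarith)
    linarith
  · have hb := binEnt hε0 hε1 (by linarith) (by linarith : 1 - q 0 ≤ 1/2)
    have hnn : 0 ≤ Real.negMulLog (q 0) := Real.negMulLog_nonneg hq0 hq1
    linarith


lemma AN (m : ℕ) (hm2 : 2 ≤ m) {ε : ℝ} (hε0 : 0 < ε) (hε1 : ε ≤ 1/Real.exp 1) :
    ((m:ℝ)+1) * (1 - Real.exp (-(ε * Real.log ((m:ℝ)+1))))^m < ε := by
  rcases le_or_gt (m+1) 11 with h | h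
  · have h2 := AN_small (m+1) (by omega) h hε0 hε1
    rw [show (m+1)-1 = m from rfl] at h2
    push_cast at h2
    exact h2
  · have h2 := Cchain (m+1) (by omega) hε0 hε1
    rw [show (m+1)-1 = m from rfl] at h2
    push_cast at h2
    exact h2

lemma conv (r k m : ℕ) (hm : m + 1 = r^k) (ε : ℝ) (q : Fin m → ℝ) :
    (ε * (k * Real.logb 2 r) <
        ∑ j : Fin (m+1), negMulLog2 ((Fin.snoc q (1 - ∑ i, q i) : Fin (m+1) → ℝ) j))
      ↔ ε * Real.log ((m:ℝ)+1) <
        ∑ j : Fin (m+1), Real.negMulLog ((Fin.snoc q (1 - ∑ i, q i) : Fin (m+1) → ℝ) j) := by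
  have hlog2 : 0 < Real.log 2 := Real.log_pos one_lt_two
  have hlogn : Real.log ((m:ℝ)+1) = (k:ℝ) * Real.log r := by
    rw [show ((m:ℝ)+1) = ((r:ℝ))^k by exact_mod_cast congrArg (fun n : ℕ => (n:ℝ)) hm,
      Real.log_pow]
  rw [show ε * ((k:ℝ) * Real.logb 2 (r:ℝ)) = (ε * Real.log ((m:ℝ)+1)) / Real.log 2 by
    rw [Real.logb, hlogn]; ring]
  simp only [negMulLog2_eq]
  rw [← Finset.sum_div]
  exact div_lt_div_iff_of_pos_right hlog2

end S19

theorem stmt19 (r k m : ℕ) (hr : 2 ≤ r) (hk : 1 ≤ k) (hm : m + 1 = r ^ k)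
    (ε : ℝ) (hε0 : 0 < ε) (hε1 : ε ≤ 1 / Real.exp 1) :
    ENNReal.ofReal (1 - ε) *
        MeasureTheory.volume {q : Fin m → ℝ | (∀ i, 0 ≤ q i) ∧ ∑ i, q i ≤ 1} <
      MeasureTheory.volume {q : Fin m → ℝ | ((∀ i, 0 ≤ q i) ∧ ∑ i, q i ≤ 1) ∧
        ε * (k * Real.logb 2 r) <
          ∑ j : Fin (m + 1), negMulLog2 ((Fin.snoc q (1 - ∑ i, q i) : Fin (m + 1) → ℝ) j)} := by
  have hε1' : ε < 1 := by
    have h37 := S19.inv_e_lt_037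
    calc ε ≤ 1 / Real.exp 1 := hε1
    _ < 0.37 := h37
    _ < 1 := by norm_num
  have hn2 : 2 ≤ m + 1 := by
    rw [hm]
    calc 2 ≤ r := hr
    _ = r^1 := (pow_one r).symm
    _ ≤ r^k := Nat.pow_le_pow_right (by omega) hk
  have hm1 : 1 ≤ m := by omega
  rcases eq_or_lt_of_le hm1 with hm1' | hm2
  · -- m = 1, i.e. two outcomes; then r = 2, k = 1
    subst hm1'
    have hrk : r ^ k = 2 := by omega
    have hr2 : r = 2 := by
      by_contra hcon
      have h3 : 3 ≤ r := by omega
      have h4 : r ≤ r^k := Nat.le_self_pow (by omega) r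
      omega
    subst hr2
    have hk1 : k = 1 := by
      by_contra hcon
      have h2k : 2 ≤ k := by omega
      have h4 : 2^2 ≤ 2^k := Nat.pow_le_pow_right (by omega) h2k
      omega
    subst hk1
    have hmain := S19.master 1
      (fun q => ε * ((1:ℕ) * Real.logb 2 (2:ℕ)) <
        ∑ j : Fin (1 + 1), negMulLog2 ((Fin.snoc q (1 - ∑ i, q i) : Fin (1 + 1) → ℝ) j))
      ε (1 - 2*ε/5) hε0 hε1'
      (by linarith) (by linarith)
      (by push_cast; nlinarith)
      (by
        intro q hq hall
        refine (S19.conv 2 1 1 hm ε q).2 ?_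
        have h2 := S19.entropy2 hε0 hε1 q hq hall
        rw [show ((1:ℕ):ℝ)+1 = 2 by norm_num]
        exact h2)
    exact hmain
  · -- m ≥ 2
    have hmain := S19.master m
      (fun q => ε * (k * Real.logb 2 r) <
        ∑ j : Fin (m + 1), negMulLog2 ((Fin.snoc q (1 - ∑ i, q i) : Fin (m + 1) → ℝ) j))
      ε (Real.exp (-(ε * Real.log ((m:ℝ)+1)))) hε0 hε1'
      (Real.exp_pos _).le
      (by
        rw [Real.exp_lt_one_iff]
        have : 0 < Real.log ((m:ℝ)+1) := Real.log_pos (by push_cast; linarith [show (1:ℝ) ≤ (m:ℝ) from by exact_mod_cast hm1])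
        nlinarith)
      (by
        have := S19.AN m hm2 hε0 hε1
        exact this)
      (by
        intro q hq hall
        exact (S19.conv r k m hm ε q).2 (S19.entropy3 m hε0 q hq hall))
    exact hmain
end
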